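/- For every integer k ≥ 1 and every natural number p, one has p^k = Σ_{j=0}^{k−1} A(k,j) · binom(j+p, k). -/

import Mathlib

/-- The number of descents of a permutation `σ` of `Fin k`, i.e. the number of
(0-indexed) positions `i` with `i + 1 < k` and `σ i > σ (i + 1)`. -/
noncomputable def descentCount {k : ℕ} (σ : Equiv.Perm (Fin k)) : ℕ :=
  Nat.card {i : Fin k // ∃ h : (i : ℕ) + 1 < k, σ ⟨(i : ℕ) + 1, h⟩ < σ i}

/-- The Eulerian number `A(k, j)`: the number of permutations of `{1, …, k}`
having exactly `j` descents. -/
noncomputable def eulerian (k j : ℕ) : ℕ :=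
  Nat.card {σ : Equiv.Perm (Fin k) // descentCount σ = j}


open Finset Equiv

namespace WorpitzkyAux

variable {k p : ℕ}

/-- The descent predicate. -/
def IsDesc (σ : Equiv.Perm (Fin k)) (i : Fin k) : Prop :=
  ∃ h : (i : ℕ) + 1 < k, σ ⟨(i : ℕ) + 1, h⟩ < σ i

instance (σ : Equiv.Perm (Fin k)) : DecidablePred (IsDesc σ) := fun i =>
  if h : (i : ℕ) + 1 < k then
    decidable_of_iff (σ ⟨(i : ℕ) + 1, h⟩ < σ i) ⟨fun hh => ⟨h, hh⟩, fun hh => hh.2⟩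
  else isFalse fun hh => h hh.1

/-- The finset of descents. -/
def descents (σ : Equiv.Perm (Fin k)) : Finset (Fin k) := univ.filter (IsDesc σ)

lemma descents_subset (σ : Equiv.Perm (Fin k)) :
    descents σ ⊆ univ.filter fun i : Fin k => (i : ℕ) + 1 < k := by
  intro i hi
  rcases (mem_filter.1 hi).2 with ⟨h, -⟩
  exact mem_filter.2 ⟨mem_univ _, h⟩

lemma card_bound (hk : 1 ≤ k) :
    (univ.filter fun i : Fin k => (i : ℕ) + 1 < k).card = k - 1 := by
  have h := Finset.card_filter_add_card_filter_not
    (s := (univ : Finset (Fin k))) (p := fun i : Fin k => (i : ℕ) + 1 < k)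
  have h2 : (univ.filter fun i : Fin k => ¬((i : ℕ) + 1 < k)) = {⟨k - 1, by omega⟩} := by
    ext j
    simp only [mem_filter, mem_univ, true_and, mem_singleton, Fin.ext_iff]
    have := j.2
    omega
  rw [h2] at h
  simp only [card_singleton, card_univ, Fintype.card_fin] at h
  omega

lemma descents_card_le (hk : 1 ≤ k) (σ : Equiv.Perm (Fin k)) :
    (descents σ).card ≤ k - 1 := by
  rw [← card_bound hk]
  exact card_le_card (descents_subset σ)

/-- number of descents below position `m` -/
def aFun (σ : Equiv.Perm (Fin k)) (m : ℕ) : ℕ :=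
  ((descents σ).filter fun j : Fin k => (j : ℕ) < m).card

lemma aFun_le_card (σ : Equiv.Perm (Fin k)) (m : ℕ) :
    aFun σ m ≤ (descents σ).card :=
  card_le_card (filter_subset _ _)

lemma aFun_le_self (σ : Equiv.Perm (Fin k)) (m : ℕ) : aFun σ m ≤ m := by
  have : ((descents σ).filter fun j : Fin k => (j : ℕ) < m).card ≤ (Finset.range m).card := by
    apply Finset.card_le_card_of_injOn (fun j : Fin k => (j : ℕ))
    · intro j hj
      exact Finset.mem_range.2 (mem_filter.1 hj).2
    · intro a _ b _ hab
      exact Fin.val_injective hab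
  simpa [aFun] using this

lemma aFun_succ (σ : Equiv.Perm (Fin k)) (m : ℕ) (hm : m < k) :
    aFun σ (m + 1) = aFun σ m + if IsDesc σ ⟨m, hm⟩ then 1 else 0 := by
  classical
  unfold aFun
  have hsplit : ((descents σ).filter fun j : Fin k => (j : ℕ) < m + 1)
      = ((descents σ).filter fun j : Fin k => (j : ℕ) < m) ∪ ((descents σ).filter fun j : Fin k => j = ⟨m, hm⟩) := by
    rw [← Finset.filter_or]
    apply Finset.filter_congr
    intro j _
    constructor
    · intro hj
      rcases Nat.lt_succ_iff_lt_or_eq.1 hj with h | h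
      · exact Or.inl h
      · exact Or.inr (Fin.ext h)
    · rintro (h | rfl)
      · exact Nat.lt_succ_of_lt h
      · exact Nat.lt_succ_self m
  have hdisj : Disjoint ((descents σ).filter fun j : Fin k => (j : ℕ) < m)
      ((descents σ).filter fun j : Fin k => j = ⟨m, hm⟩) := by
    rw [Finset.disjoint_left]
    rintro a ha hb
    rcases mem_filter.1 ha with ⟨-, ha2⟩
    rcases mem_filter.1 hb with ⟨-, rfl⟩
    simp at ha2
  rw [hsplit, Finset.card_union_of_disjoint hdisj, Finset.filter_eq']
  have hmem : (⟨m, hm⟩ ∈ descents σ) ↔ IsDesc σ ⟨m, hm⟩ := by simp [descents]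
  by_cases hd : IsDesc σ ⟨m, hm⟩
  · rw [if_pos (hmem.2 hd), if_pos hd, card_singleton]
  · rw [if_neg (fun hc => hd (hmem.1 hc)), if_neg hd, card_empty]

lemma aFun_lower (hk : 1 ≤ k) (σ : Equiv.Perm (Fin k)) (i : Fin k) :
    (i : ℕ) ≤ aFun σ (i : ℕ) + (k - 1 - (descents σ).card) := by
  classical
  have h1 : aFun σ (i : ℕ) = ((Finset.Iio i).filter (IsDesc σ)).card := by
    unfold aFun
    congr 1
    ext j
    simp only [mem_filter, Finset.mem_Iio, descents, mem_univ, true_and, Fin.lt_def]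
    tauto
  have h2 : ((Finset.Iio i).filter (IsDesc σ)).card
      + ((Finset.Iio i).filter fun j : Fin k => ¬ IsDesc σ j).card = (i : ℕ) := by
    rw [Finset.card_filter_add_card_filter_not, Fin.card_Iio]
  have h3 : ((Finset.Iio i).filter fun j : Fin k => ¬ IsDesc σ j).card
      ≤ k - 1 - (descents σ).card := by
    have hsub : ((Finset.Iio i).filter fun j : Fin k => ¬ IsDesc σ j)
        ⊆ (univ.filter fun j : Fin k => (j : ℕ) + 1 < k) \ descents σ := by
      intro j hj
      rcases mem_filter.1 hj with ⟨hj1, hj2⟩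
      rw [Finset.mem_Iio, Fin.lt_def] at hj1
      have hik := i.2
      refine Finset.mem_sdiff.2 ⟨mem_filter.2 ⟨mem_univ _, by omega⟩, ?_⟩
      simp only [descents, mem_filter, mem_univ, true_and]
      exact hj2
    calc ((Finset.Iio i).filter fun j : Fin k => ¬ IsDesc σ j).card
        ≤ ((univ.filter fun j : Fin k => (j : ℕ) + 1 < k) \ descents σ).card :=
          card_le_card hsub
      _ = k - 1 - (descents σ).card := by
          rw [Finset.card_sdiff_of_subset (descents_subset σ), card_bound hk]
  omega

/-- strict monotonicity from consecutive comparisons -/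
lemma strictMono_of_lt_succ {β : Type*} [Preorder β] {u : Fin k → β}
    (H : ∀ (m : ℕ) (h : m + 1 < k), u ⟨m, by omega⟩ < u ⟨m + 1, h⟩) : StrictMono u := by
  have key : ∀ n (hn : n < k) m (hm : m < k), m < n → u ⟨m, hm⟩ < u ⟨n, hn⟩ := by
    intro n
    induction n with
    | zero => intro _ _ _ h; omega
    | succ n ih =>
      intro hn m hm hmn
      rcases Nat.lt_succ_iff_lt_or_eq.1 hmn with h | rfl
      · exact lt_trans (ih (by omega) m hm h) (H n hn)
      · exact H m hn
  intro a b hab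
  exact key b.1 b.2 a.1 a.2 hab

lemma le_apply_of_strictMono {n : ℕ} {u : Fin k → Fin n} (hu : StrictMono u) (i : Fin k) :
    (i : ℕ) ≤ (u i : ℕ) := by
  have key : ∀ m (hm : m < k), m ≤ (u ⟨m, hm⟩ : ℕ) := by
    intro m
    induction m with
    | zero => intro _; omega
    | succ m ih =>
      intro hm
      have h1 := ih (by omega)
      have h2 : u ⟨m, by omega⟩ < u ⟨m + 1, hm⟩ := hu (by simp [Fin.lt_def])
      rw [Fin.lt_def] at h2
      omega
  have := key i.1 i.2
  simpa using this

lemma apply_le_of_strictMono {n : ℕ} {u : Fin k → Fin n} (hu : StrictMono u) (i : Fin k) :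
    (u i : ℕ) + (k - 1 - (i : ℕ)) ≤ n - 1 := by
  have hrev : StrictMono fun j : Fin k => Fin.rev (u (Fin.rev j)) := by
    intro a b hab
    simp only [Fin.rev_lt_rev]
    exact hu (Fin.rev_lt_rev.2 hab)
  have := le_apply_of_strictMono hrev (Fin.rev i)
  simp only [Fin.rev_rev, Fin.val_rev] at this
  have h1 := i.2
  have h2 := (u i).2
  omega

/-- The sorting permutation with ties broken by larger index. -/
noncomputable def sortRev (f : Fin k → Fin p) : Equiv.Perm (Fin k) :=
  (Tuple.sort (f ∘ Fin.rev)).trans Fin.revPerm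

/-- The associated strictly monotone tuple. -/
def hFun (σ : Equiv.Perm (Fin k)) (f : Fin k → Fin p) (i : Fin k) :
    Fin (p + (descents σ).card) :=
  ⟨(f (σ i) : ℕ) + aFun σ (i : ℕ), by
    have h1 := (f (σ i)).2
    have h2 := aFun_le_card σ (i : ℕ)
    omega⟩

lemma key_iff (σ : Equiv.Perm (Fin k)) (f : Fin k → Fin p) :
    sortRev f = σ ↔ StrictMono (hFun σ f) := by
  have invol : ∀ e : Equiv.Perm (Fin k), (e.trans Fin.revPerm).trans Fin.revPerm = e := by
    intro e; ext x; simp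
  have stepA : sortRev f = σ ↔ Tuple.sort (f ∘ Fin.rev) = σ.trans Fin.revPerm := by
    constructor
    · intro h; rw [← h]; unfold sortRev; exact (invol _).symm
    · intro h; unfold sortRev; rw [h]; exact invol σ
  rw [stepA, eq_comm, Tuple.eq_sort_iff']
  set G := (σ.trans Fin.revPerm).trans (Tuple.graphEquiv₁ (f ∘ Fin.rev)) with hG
  have hval : ∀ i : Fin k,
      (G i : Fin p ×ₗ Fin k) = toLex (f (σ i), Fin.rev (σ i)) := by
    intro i
    show toLex ((f ∘ Fin.rev) (Fin.rev (σ i)), Fin.rev (σ i)) = _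
    simp [Function.comp, Fin.rev_rev]
  have hpt : ∀ (m : ℕ) (hm : m + 1 < k),
      (G ⟨m, by omega⟩ < G ⟨m + 1, hm⟩ ↔
        hFun σ f ⟨m, by omega⟩ < hFun σ f ⟨m + 1, hm⟩) := by
    intro m hm
    have hmk : m < k := by omega
    have hsucc := aFun_succ σ m hmk
    rw [← Subtype.coe_lt_coe, hval ⟨m, by omega⟩, hval ⟨m + 1, hm⟩, Prod.Lex.lt_iff]
    show (f (σ ⟨m, hmk⟩) < f (σ ⟨m + 1, hm⟩) ∨
        f (σ ⟨m, hmk⟩) = f (σ ⟨m + 1, hm⟩) ∧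
          Fin.rev (σ ⟨m, hmk⟩) < Fin.rev (σ ⟨m + 1, hm⟩)) ↔ _
    rw [Fin.rev_lt_rev, Fin.lt_def (a := hFun σ f ⟨m, by omega⟩)]
    show _ ↔ ((f (σ ⟨m, hmk⟩) : ℕ) + aFun σ m
        < (f (σ ⟨m + 1, hm⟩) : ℕ) + aFun σ (m + 1))
    rw [hsucc]
    by_cases hd : IsDesc σ ⟨m, hmk⟩
    · have hlt : (σ ⟨m + 1, hm⟩ : ℕ) < (σ ⟨m, hmk⟩ : ℕ) := hd.2
      rw [if_pos hd]
      simp only [Fin.lt_def, Fin.ext_iff]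
      omega
    · have hnlt : ¬ ((σ ⟨m + 1, hm⟩ : ℕ) < (σ ⟨m, hmk⟩ : ℕ)) := fun hc => hd ⟨hm, hc⟩
      rw [if_neg hd]
      simp only [Fin.lt_def, Fin.ext_iff]
      omega
  constructor
  · intro h
    apply strictMono_of_lt_succ
    intro m hm
    exact (hpt m hm).1 (h (show (⟨m, by omega⟩ : Fin k) < ⟨m + 1, hm⟩ from by
      rw [Fin.mk_lt_mk]; omega))
  · intro h
    apply strictMono_of_lt_succ
    intro m hm
    exact (hpt m hm).2 (h (show (⟨m, by omega⟩ : Fin k) < ⟨m + 1, hm⟩ from by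
      rw [Fin.mk_lt_mk]; omega))

/-- Inverse construction: recover the tuple from a strictly monotone map. -/
def gFun (hk : 1 ≤ k) (σ : Equiv.Perm (Fin k)) (h : Fin k → Fin (p + (descents σ).card))
    (hh : StrictMono h) (x : Fin k) : Fin p :=
  ⟨(h (σ.symm x) : ℕ) - aFun σ ((σ.symm x : Fin k) : ℕ), by
    have hup := apply_le_of_strictMono hh (σ.symm x)
    have hlow := aFun_lower hk σ (σ.symm x)
    have hle := aFun_le_self σ ((σ.symm x : Fin k) : ℕ)
    have hdc := descents_card_le hk σ
    have h2 := (h (σ.symm x)).2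
    have h3 := (σ.symm x).2
    have hla := le_apply_of_strictMono hh (σ.symm x)
    omega⟩

lemma hFun_gFun (hk : 1 ≤ k) (σ : Equiv.Perm (Fin k))
    (h : Fin k → Fin (p + (descents σ).card)) (hh : StrictMono h) :
    hFun σ (gFun hk σ h hh) = h := by
  funext i
  apply Fin.ext
  show ((h (σ.symm (σ i)) : ℕ) - aFun σ ((σ.symm (σ i) : Fin k) : ℕ)) + aFun σ (i : ℕ)
      = (h i : ℕ)
  rw [Equiv.symm_apply_apply]
  have hle : aFun σ (i : ℕ) ≤ (h i : ℕ) :=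
    le_trans (aFun_le_self σ i) (le_apply_of_strictMono hh i)
  omega

/-- The fiber of `sortRev` over `σ` is equivalent to strictly monotone tuples. -/
noncomputable def fiberEquiv (hk : 1 ≤ k) (σ : Equiv.Perm (Fin k)) :
    {f : Fin k → Fin p // sortRev f = σ}
      ≃ {h : Fin k → Fin (p + (descents σ).card) // StrictMono h} where
  toFun f := ⟨hFun σ f.1, (key_iff σ f.1).1 f.2⟩
  invFun h := ⟨gFun hk σ h.1 h.2,
    (key_iff σ _).2 (by rw [hFun_gFun hk σ h.1 h.2]; exact h.2)⟩
  left_inv f := by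
    apply Subtype.ext
    funext x
    apply Fin.ext
    show (hFun σ f.1 (σ.symm x) : ℕ) - aFun σ ((σ.symm x : Fin k) : ℕ) = (f.1 x : ℕ)
    have hv : (hFun σ f.1 (σ.symm x) : ℕ)
        = (f.1 (σ (σ.symm x)) : ℕ) + aFun σ ((σ.symm x : Fin k) : ℕ) := rfl
    rw [hv, Equiv.apply_symm_apply]
    omega
  right_inv h := Subtype.ext (hFun_gFun hk σ h.1 h.2)

lemma card_strictMono (k n : ℕ) :
    Fintype.card {h : Fin k → Fin n // StrictMono h} = n.choose k := by
  classical
  have e : {h : Fin k → Fin n // StrictMono h}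
      ≃ {s : Finset (Fin n) // s ∈ Finset.powersetCard k univ} :=
    { toFun := fun h => ⟨Finset.image h.1 univ, Finset.mem_powersetCard.2
        ⟨subset_univ _, by
          rw [Finset.card_image_of_injective _ h.2.injective, card_univ, Fintype.card_fin]⟩⟩
      invFun := fun s => ⟨Finset.orderEmbOfFin s.1 (Finset.mem_powersetCard.1 s.2).2,
        (Finset.orderEmbOfFin s.1 _).strictMono⟩
      left_inv := fun h => Subtype.ext
        (Finset.orderEmbOfFin_unique _
          (fun x => Finset.mem_image_of_mem _ (mem_univ x)) h.2).symm
      right_inv := fun s => Subtype.ext (by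
        apply Finset.coe_injective
        rw [Finset.coe_image, Finset.coe_univ, Set.image_univ, Finset.range_orderEmbOfFin]) }
  rw [Fintype.card_congr e,
    Fintype.card_of_subtype (Finset.powersetCard k univ) (fun _ => Iff.rfl),
    Finset.card_powersetCard, card_univ, Fintype.card_fin]

lemma card_fiber (hk : 1 ≤ k) (σ : Equiv.Perm (Fin k)) :
    Nat.card {f : Fin k → Fin p // sortRev f = σ}
      = (p + (descents σ).card).choose k := by
  classical
  rw [Nat.card_eq_fintype_card, ← card_strictMono k (p + (descents σ).card)]
  exact Fintype.card_congr (fiberEquiv hk σ)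

end WorpitzkyAux

/-- Worpitzky's identity: for `k ≥ 1` and every natural number `p`,
`p ^ k = ∑_{j=0}^{k-1} A(k, j) * binom (j + p) k`. -/
theorem eulerian_worpitzky (k : ℕ) (hk : 1 ≤ k) (p : ℕ) :
    p ^ k = ∑ j ∈ Finset.range k, eulerian k j * Nat.choose (j + p) k := by
  classical
  have hdesc : ∀ σ : Equiv.Perm (Fin k), descentCount σ = (WorpitzkyAux.descents σ).card := by
    intro σ
    rw [show descentCount σ = Nat.card {i : Fin k // WorpitzkyAux.IsDesc σ i} from rfl,
      Nat.card_eq_fintype_card, Fintype.card_subtype]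
    rfl
  have heul : ∀ j, eulerian k j
      = (Finset.univ.filter fun σ : Equiv.Perm (Fin k) => descentCount σ = j).card := by
    intro j
    rw [eulerian, Nat.card_eq_fintype_card, Fintype.card_subtype]
  have hdlt : ∀ σ : Equiv.Perm (Fin k), descentCount σ < k := by
    intro σ
    have := WorpitzkyAux.descents_card_le hk σ
    rw [hdesc σ]; omega
  have hfib : ∀ σ : Equiv.Perm (Fin k),
      (Finset.univ.filter fun f : Fin k → Fin p => WorpitzkyAux.sortRev f = σ).card
        = (p + descentCount σ).choose k := by
    intro σ
    rw [hdesc σ, ← WorpitzkyAux.card_fiber (p := p) hk σ, Nat.card_eq_fintype_card,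
      Fintype.card_subtype]
  calc p ^ k = Fintype.card (Fin k → Fin p) := by simp
    _ = ∑ σ : Equiv.Perm (Fin k),
        (Finset.univ.filter fun f : Fin k → Fin p => WorpitzkyAux.sortRev f = σ).card := by
        rw [← Finset.card_univ,
          Finset.card_eq_sum_card_fiberwise
            (fun f _ => Finset.mem_univ (WorpitzkyAux.sortRev f))]
    _ = ∑ σ : Equiv.Perm (Fin k), (p + descentCount σ).choose k :=
        Finset.sum_congr rfl fun σ _ => hfib σ
    _ = ∑ j ∈ Finset.range k, ∑ σ ∈ Finset.univ.filter
          (fun σ : Equiv.Perm (Fin k) => descentCount σ = j), (p + descentCount σ).choose k :=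
        (Finset.sum_fiberwise_of_maps_to (fun σ _ => Finset.mem_range.2 (hdlt σ)) _).symm
    _ = ∑ j ∈ Finset.range k, eulerian k j * Nat.choose (j + p) k := by
        refine Finset.sum_congr rfl fun j hj => ?_
        rw [Finset.sum_congr rfl (fun σ hσ => by
            rw [(Finset.mem_filter.1 hσ).2, Nat.add_comm p j]),
          Finset.sum_const, heul j, smul_eq_mul]
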